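/- There exists a universal constant C₀ > 0 with the following property. Let F(x) = xᵗAx + Bx + C be a quadratic form on ℝ^d with A real symmetric, ‖A‖₂/D ≤ 1 and ‖B‖/D ≤ 1 for some D > 0, and consider the noisy oracle returning F(x) + D·N(0,1) independently at each call. Fix a coordinate i, let K ≥ 1, and let f_{−e_i,e_i} = (1/K²)·Σ_{1 ≤ j,l ≤ K} 1{F(−e_i) + D·G_j < F(e_i) + D·G'_l} with G_1,…,G_K,G'_1,…,G'_K independent standard Gaussians. Define B̂_i(D) = h₅(f_{−e_i,e_i})/√2, where h₅ is the clamped inverse of Φ on [−5,5]. Then E[(B̂_i(D) − B_i/D)²] ≤ C₀/K. -/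

import Mathlib

open Matrix MeasureTheory ProbabilityTheory

universe u

/-- The cumulative distribution function of the standard Gaussian distribution `N(0,1)`. -/
noncomputable def stdGaussCDF : ℝ → ℝ := fun t => ProbabilityTheory.cdf (gaussianReal 0 1) t

/-- `h` is the clamped inverse of the standard Gaussian CDF `Φ` on `[−c, c]`. -/
def IsClampedGaussInv (c : ℝ) (h : ℝ → ℝ) : Prop :=
  (∀ t ∈ Set.Icc (-c) c, h (stdGaussCDF t) = t) ∧
  (∀ x, x < stdGaussCDF (-c) → h x = -c) ∧
  (∀ x, stdGaussCDF c < x → h x = c)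

/-- The Euclidean norm of a vector of `ℝ^d`. -/
noncomputable def evnorm {d : ℕ} (v : Fin d → ℝ) : ℝ :=
  Real.sqrt (∑ i, v i ^ 2)

/-- The operator norm of a real matrix, induced by the Euclidean norm. -/
noncomputable def l2OpNorm {d : ℕ} (M : Matrix (Fin d) (Fin d) ℝ) : ℝ :=
  ‖(Matrix.toEuclideanCLM (𝕜 := ℝ) M : EuclideanSpace ℝ (Fin d) →L[ℝ] EuclideanSpace ℝ (Fin d))‖

/-- The quadratic form `F(x) = xᵗAx + Bx + C` on `ℝ^d`. -/
noncomputable def quadForm {d : ℕ} (A : Matrix (Fin d) (Fin d) ℝ) (B : Fin d → ℝ) (C : ℝ)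
    (x : Fin d → ℝ) : ℝ :=
  x ⬝ᵥ A.mulVec x + B ⬝ᵥ x + C

/-- The empirical comparison frequency of `K` noisy evaluations (with noise standard
deviation `D`) at two points with exact fitness values `fx` and `fy`. -/
noncomputable def noisyCompFreq {Ω : Type u} (K : ℕ) (fx fy D : ℝ)
    (G G' : Fin K → Ω → ℝ) (ω : Ω) : ℝ :=
  (1 / (K : ℝ) ^ 2) * ∑ j : Fin K, ∑ l : Fin K,
    if fx + D * G j ω < fy + D * G' l ω then (1 : ℝ) else 0

section Auxil
open Real

/-! ### Convolution of two standard Gaussians -/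

lemma pdf_mul_eq (s x : ℝ) :
    gaussianPDFReal 0 1 x * gaussianPDFReal 0 1 (x - s)
      = gaussianPDFReal 0 2 s * ((Real.sqrt π)⁻¹ * Real.exp (-(x - s/2)^2)) := by
  simp only [gaussianPDFReal, sub_zero, NNReal.coe_one, NNReal.coe_two, NNReal.coe_ofNat, mul_one]
  have c1 : (Real.sqrt (2*π))⁻¹ * (Real.sqrt (2*π))⁻¹ = (2*π)⁻¹ := by
    rw [← mul_inv, Real.mul_self_sqrt (by positivity)]
  have c2 : (Real.sqrt (2*π*2))⁻¹ * (Real.sqrt π)⁻¹ = (2*π)⁻¹ := by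
    rw [← mul_inv, ← Real.sqrt_mul (by positivity)]
    have h : 2*π*2*π = (2*π)^2 := by ring
    rw [h, Real.sqrt_sq (by positivity)]
  calc (Real.sqrt (2*π))⁻¹ * rexp (-x^2/2) * ((Real.sqrt (2*π))⁻¹ * rexp (-(x-s)^2/2))
      = ((Real.sqrt (2*π))⁻¹ * (Real.sqrt (2*π))⁻¹) * rexp (-x^2/2 + -(x-s)^2/2) := by
        rw [Real.exp_add]; ring
    _ = ((Real.sqrt (2*π*2))⁻¹ * (Real.sqrt π)⁻¹) * rexp (-s^2/(2*2) + -(x - s/2)^2) := by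
        rw [c1, c2]; congr 1; ring
    _ = _ := by rw [Real.exp_add]; ring

lemma lintegral_pdf_mul (s : ℝ) :
    ∫⁻ x, ENNReal.ofReal (gaussianPDFReal 0 1 x * gaussianPDFReal 0 1 (x - s))
      = gaussianPDF 0 2 s := by
  simp_rw [pdf_mul_eq s]
  have hint : Integrable (fun x : ℝ => (Real.sqrt π)⁻¹ * Real.exp (-(x - s/2)^2)) := by
    apply Integrable.const_mul
    have h : Integrable (fun x : ℝ => Real.exp (-1 * x^2)) := integrable_exp_neg_mul_sq one_pos
    simpa using h.comp_sub_right (s/2)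
  rw [← ofReal_integral_eq_lintegral_ofReal (hint.const_mul _)
      (Filter.Eventually.of_forall fun x =>
        mul_nonneg (gaussianPDFReal_nonneg _ _ _) (by positivity))]
  rw [integral_const_mul, integral_const_mul,
    integral_sub_right_eq_self (fun x => Real.exp (-(x^2))) (μ := volume) (s/2)]
  have h : ∫ x : ℝ, Real.exp (-(x^2)) = Real.sqrt π := by
    have := integral_gaussian 1
    simpa using this
  rw [h, inv_mul_cancel₀ (by positivity), mul_one, gaussianPDF]

lemma gauss_conv (c : ℝ) :
    ((gaussianReal 0 1).prod (gaussianReal 0 1)) {z : ℝ × ℝ | z.1 - z.2 < c}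
      = gaussianReal 0 2 (Set.Iio c) := by
  have hmeas : MeasurableSet {z : ℝ × ℝ | z.1 - z.2 < c} :=
    measurableSet_lt (measurable_fst.sub measurable_snd) measurable_const
  rw [Measure.prod_apply hmeas]
  have hset : ∀ x : ℝ, (Prod.mk x ⁻¹' {z : ℝ × ℝ | z.1 - z.2 < c}) = Set.Ioi (x - c) := by
    intro x; ext y
    simp only [Set.mem_preimage, Set.mem_setOf_eq, Set.mem_Ioi]
    constructor <;> intro h <;> linarith
  have key : ∀ x : ℝ, (gaussianReal 0 1) (Set.Ioi (x - c))
      = ∫⁻ s in Set.Iio c, gaussianPDF 0 1 (x - s) := by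
    intro x
    rw [gaussianReal_apply 0 one_ne_zero]
    have hmp : MeasurePreserving (fun s : ℝ => x - s) volume volume :=
      MeasureTheory.Measure.measurePreserving_sub_left volume x
    have hpre : (fun s : ℝ => x - s) ⁻¹' (Set.Ioi (x - c)) = Set.Iio c := by
      ext y
      simp only [Set.mem_preimage, Set.mem_Ioi, Set.mem_Iio]
      constructor <;> intro h <;> linarith
    rw [← hpre, hmp.setLIntegral_comp_preimage measurableSet_Ioi (measurable_gaussianPDF 0 1)]
  simp_rw [hset, key]
  rw [gaussianReal_of_var_ne_zero 0 one_ne_zero,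
    lintegral_withDensity_eq_lintegral_mul _ (measurable_gaussianPDF 0 1)
      (Measurable.lintegral_prod_right (f := fun x s => gaussianPDF 0 1 (x - s))
        ((measurable_gaussianPDF 0 1).comp (measurable_fst.sub measurable_snd)))]
  simp only [Pi.mul_apply]
  have hswap : ∫⁻ x, gaussianPDF 0 1 x * ∫⁻ s in Set.Iio c, gaussianPDF 0 1 (x - s)
      = ∫⁻ s in Set.Iio c, ∫⁻ x, gaussianPDF 0 1 x * gaussianPDF 0 1 (x - s) := by
    have hne : ∀ y : ℝ, gaussianPDF 0 1 y ≠ ⊤ := fun y => ENNReal.ofReal_ne_top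
    simp_rw [← lintegral_const_mul' _ _ (hne _)]
    exact lintegral_lintegral_swap
      (((measurable_gaussianPDF 0 1).comp measurable_fst).mul
        ((measurable_gaussianPDF 0 1).comp (measurable_fst.sub measurable_snd))).aemeasurable
  rw [hswap]
  have hinner : ∀ s : ℝ, (∫⁻ x, gaussianPDF 0 1 x * gaussianPDF 0 1 (x - s))
      = gaussianPDF 0 2 s := by
    intro s
    simp_rw [gaussianPDF, ← ENNReal.ofReal_mul (gaussianPDFReal_nonneg 0 1 _)]
    exact lintegral_pdf_mul s
  simp_rw [hinner]
  rw [gaussianReal_apply 0 (by norm_num)]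

/-! ### CDF facts -/

lemma stdGaussCDF_nonneg (t : ℝ) : 0 ≤ stdGaussCDF t := cdf_nonneg _ t

lemma stdGaussCDF_le_one (t : ℝ) : stdGaussCDF t ≤ 1 := cdf_le_one _ t

lemma stdGaussCDF_eq (t : ℝ) :
    ENNReal.ofReal (stdGaussCDF t) = gaussianReal 0 1 (Set.Iic t) :=
  ofReal_cdf _ t

lemma gaussianReal_singleton (t : ℝ) : gaussianReal 0 1 {t} = 0 :=
  gaussianReal_absolutelyContinuous 0 one_ne_zero (measure_singleton t)

lemma gaussianReal_Iio (t : ℝ) :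
    gaussianReal 0 1 (Set.Iio t) = ENNReal.ofReal (stdGaussCDF t) := by
  rw [stdGaussCDF_eq, ← Set.Iio_union_right,
    measure_union (by simp) (measurableSet_singleton t), gaussianReal_singleton, add_zero]

lemma gauss2_Iio (c : ℝ) :
    gaussianReal 0 2 (Set.Iio c) = ENNReal.ofReal (stdGaussCDF (c / Real.sqrt 2)) := by
  have hmap : (gaussianReal 0 1).map (fun x => Real.sqrt 2 * x) = gaussianReal 0 2 := by
    have := gaussianReal_map_const_mul (μ := 0) (v := 1) (Real.sqrt 2)
    have h2 : (NNReal.mk (Real.sqrt 2 ^ 2) (sq_nonneg _)) * 1 = 2 := by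
      ext
      simp [Real.sq_sqrt (by norm_num : (0:ℝ) ≤ 2)]
    rw [h2, mul_zero] at this
    exact this
  rw [← hmap, Measure.map_apply (measurable_const_mul _) measurableSet_Iio]
  have hpre : (fun x : ℝ => Real.sqrt 2 * x) ⁻¹' Set.Iio c = Set.Iio (c / Real.sqrt 2) := by
    ext x
    simp only [Set.mem_preimage, Set.mem_Iio]
    rw [lt_div_iff₀' (by positivity : (0:ℝ) < Real.sqrt 2)]
  rw [hpre, gaussianReal_Iio]

lemma stdGaussCDF_sub (s t : ℝ) (hst : s ≤ t) :
    stdGaussCDF t - stdGaussCDF s = ∫ x in Set.Ioc s t, gaussianPDFReal 0 1 x := by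
  have h1 : gaussianReal 0 1 (Set.Ioc s t)
      = ENNReal.ofReal (∫ x in Set.Ioc s t, gaussianPDFReal 0 1 x) :=
    gaussianReal_apply_eq_integral 0 one_ne_zero _
  have h2 : gaussianReal 0 1 (Set.Iic t)
      = gaussianReal 0 1 (Set.Iic s) + gaussianReal 0 1 (Set.Ioc s t) := by
    rw [← measure_union (by exact Set.Iic_disjoint_Ioc le_rfl) measurableSet_Ioc,
      Set.Iic_union_Ioc_eq_Iic hst]
  have h3 := stdGaussCDF_eq t
  have h4 := stdGaussCDF_eq s
  rw [← h3, ← h4, h1] at h2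
  have hnn : 0 ≤ ∫ x in Set.Ioc s t, gaussianPDFReal 0 1 x :=
    setIntegral_nonneg measurableSet_Ioc fun x _ => gaussianPDFReal_nonneg 0 1 x
  have h5 := congrArg ENNReal.toReal h2
  rw [ENNReal.toReal_add (by simp) (by simp), ENNReal.toReal_ofReal (stdGaussCDF_nonneg t),
    ENNReal.toReal_ofReal (stdGaussCDF_nonneg s), ENNReal.toReal_ofReal hnn] at h5
  linarith

lemma integrableOn_pdf (s : Set ℝ) : IntegrableOn (gaussianPDFReal 0 1) s volume :=
  (integrable_gaussianPDFReal 0 1).integrableOn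

lemma one_le_sqrt_two_pi : (1:ℝ) ≤ Real.sqrt (2 * π) := by
  nlinarith [Real.sqrt_nonneg (2*π), Real.sq_sqrt (by positivity : (0:ℝ) ≤ 2*π),
    Real.pi_gt_three]

lemma pdf_le_one (x : ℝ) : gaussianPDFReal 0 1 x ≤ 1 := by
  rw [gaussianPDFReal]
  simp only [NNReal.coe_one, mul_one, sub_zero]
  have h2 : (√(2*π))⁻¹ ≤ 1 := by
    rw [inv_le_one_iff₀]
    exact Or.inr one_le_sqrt_two_pi
  have h1 : rexp (-x^2/2) ≤ 1 := Real.exp_le_one_iff.2 (by nlinarith [sq_nonneg x])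
  calc (√(2*π))⁻¹ * rexp (-x^2/2) ≤ 1 * 1 :=
        mul_le_mul h2 h1 (Real.exp_nonneg _) zero_le_one
    _ = 1 := one_mul 1

lemma integrableOn_const_Ioc {s t c : ℝ} : IntegrableOn (fun _ : ℝ => c) (Set.Ioc s t) volume := by
  exact integrableOn_const (by simp [Real.volume_Ioc])

lemma stdGaussCDF_lip (s t : ℝ) (hst : s ≤ t) : stdGaussCDF t - stdGaussCDF s ≤ t - s := by
  rw [stdGaussCDF_sub s t hst]
  calc ∫ x in Set.Ioc s t, gaussianPDFReal 0 1 x ≤ ∫ _x in Set.Ioc s t, (1:ℝ) := by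
        refine setIntegral_mono_on (integrableOn_pdf _) integrableOn_const_Ioc measurableSet_Ioc ?_
        exact fun x _ => pdf_le_one x
    _ = t - s := by simp [Real.volume_Ioc, ENNReal.toReal_ofReal (by linarith : (0:ℝ) ≤ t - s), hst]

noncomputable def mGauss : ℝ := gaussianPDFReal 0 1 5

lemma mGauss_pos : 0 < mGauss := gaussianPDFReal_pos 0 1 5 one_ne_zero

lemma pdf_ge (x : ℝ) (hx : x ∈ Set.Icc (-5:ℝ) 5) : mGauss ≤ gaussianPDFReal 0 1 x := by
  obtain ⟨h1, h2⟩ := hx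
  rw [mGauss, gaussianPDFReal, gaussianPDFReal]
  apply mul_le_mul_of_nonneg_left _ (by positivity)
  apply Real.exp_le_exp.2
  rw [div_le_div_iff_of_pos_right (by positivity)]
  nlinarith

lemma stdGaussCDF_lowlip (s t : ℝ) (hs : -5 ≤ s) (hst : s ≤ t) (ht : t ≤ 5) :
    mGauss * (t - s) ≤ stdGaussCDF t - stdGaussCDF s := by
  rw [stdGaussCDF_sub s t hst]
  calc mGauss * (t - s) = ∫ _x in Set.Ioc s t, mGauss := by
        simp [Real.volume_Ioc, ENNReal.toReal_ofReal (by linarith : (0:ℝ) ≤ t - s), mul_comm, hst]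
    _ ≤ ∫ x in Set.Ioc s t, gaussianPDFReal 0 1 x := by
        refine setIntegral_mono_on integrableOn_const_Ioc (integrableOn_pdf _) measurableSet_Ioc ?_
        intro x hx
        exact pdf_ge x ⟨by linarith [hx.1], by linarith [hx.2]⟩

lemma stdGaussCDF_mono : Monotone stdGaussCDF := monotone_cdf _

lemma stdGaussCDF_cont : Continuous stdGaussCDF := by
  have hl : LipschitzWith 1 stdGaussCDF := by
    apply LipschitzWith.of_dist_le_mul
    intro x y
    rw [Real.dist_eq, Real.dist_eq, NNReal.coe_one, one_mul]
    rcases le_total x y with hxy | hxy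
    · rw [abs_sub_comm, abs_of_nonneg (by linarith [stdGaussCDF_mono hxy]),
        abs_sub_comm x y, abs_of_nonneg (by linarith)]
      exact stdGaussCDF_lip x y hxy
    · rw [abs_of_nonneg (by linarith [stdGaussCDF_mono hxy]), abs_of_nonneg (by linarith)]
      exact stdGaussCDF_lip y x hxy
  exact hl.continuous

lemma clamp_eq (h : ℝ → ℝ) (hh : IsClampedGaussInv 5 h) (u : ℝ) :
    h u = h (max (stdGaussCDF (-5)) (min (stdGaussCDF 5) u)) := by
  obtain ⟨h1, h2, h3⟩ := hh
  have hab : stdGaussCDF (-5) ≤ stdGaussCDF 5 := stdGaussCDF_mono (by norm_num)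
  rcases lt_or_ge u (stdGaussCDF (-5)) with hu | hu
  · rw [h2 u hu, min_eq_right (le_trans hu.le hab), max_eq_left hu.le,
      h1 (-5) ⟨le_rfl, by norm_num⟩]
  · rcases le_or_gt u (stdGaussCDF 5) with hu2 | hu2
    · rw [min_eq_right hu2, max_eq_right hu]
    · rw [h3 u hu2, min_eq_left hu2.le, max_eq_right hab, h1 5 ⟨by norm_num, le_rfl⟩]

lemma clamp_lip (a b u v : ℝ) :
    |max a (min b u) - max a (min b v)| ≤ |u - v| := by
  calc |max a (min b u) - max a (min b v)| ≤ max |a - a| |min b u - min b v| :=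
        abs_max_sub_max_le_max a (min b u) a (min b v)
    _ = |min b u - min b v| := by simp
    _ ≤ max |b - b| |u - v| := abs_min_sub_min_le_max b u b v
    _ = |u - v| := by simp

lemma h_lipschitz (h : ℝ → ℝ) (hh : IsClampedGaussInv 5 h) (u v : ℝ) :
    |h u - h v| ≤ mGauss⁻¹ * |u - v| := by
  have hab : stdGaussCDF (-5) ≤ stdGaussCDF 5 := stdGaussCDF_mono (by norm_num)
  have hsurj : ∀ w ∈ Set.Icc (stdGaussCDF (-5)) (stdGaussCDF 5),
      ∃ t ∈ Set.Icc (-5:ℝ) 5, stdGaussCDF t = w := by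
    intro w hw
    obtain ⟨t, ht, htw⟩ :=
      intermediate_value_Icc (by norm_num : (-5:ℝ) ≤ 5) stdGaussCDF_cont.continuousOn hw
    exact ⟨t, ht, htw⟩
  obtain ⟨s, hs, hsw⟩ := hsurj (max (stdGaussCDF (-5)) (min (stdGaussCDF 5) u))
    ⟨le_max_left _ _, max_le hab (min_le_left _ _)⟩
  obtain ⟨t, ht, htw⟩ := hsurj (max (stdGaussCDF (-5)) (min (stdGaussCDF 5) v))
    ⟨le_max_left _ _, max_le hab (min_le_left _ _)⟩
  have hhu : h u = s := by rw [clamp_eq h hh u, ← hsw, hh.1 s hs]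
  have hhv : h v = t := by rw [clamp_eq h hh v, ← htw, hh.1 t ht]
  have key : mGauss * |s - t| ≤ |stdGaussCDF s - stdGaussCDF t| := by
    rcases le_total s t with hle | hle
    · rw [abs_sub_comm, abs_of_nonneg (by linarith), abs_sub_comm (stdGaussCDF s),
        abs_of_nonneg (by linarith [stdGaussCDF_mono hle])]
      exact stdGaussCDF_lowlip s t hs.1 hle ht.2
    · rw [abs_of_nonneg (by linarith), abs_of_nonneg (by linarith [stdGaussCDF_mono hle])]
      exact stdGaussCDF_lowlip t s ht.1 hle hs.2
  have h2 : |stdGaussCDF s - stdGaussCDF t| ≤ |u - v| := by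
    rw [hsw, htw]; exact clamp_lip _ _ u v
  rw [hhu, hhv]
  have key2 : |s - t| ≤ |stdGaussCDF s - stdGaussCDF t| / mGauss :=
    (le_div_iff₀' mGauss_pos).mpr key
  calc |s - t| ≤ |stdGaussCDF s - stdGaussCDF t| / mGauss := key2
    _ ≤ mGauss⁻¹ * |u - v| := by
        rw [div_eq_inv_mul]
        exact mul_le_mul_of_nonneg_left h2 (inv_nonneg.mpr mGauss_pos.le)

end Auxil

/-- Mean squared error of the CopQuad estimate `B̂_i(D) = h₅(f_{−e_i,e_i})/√2` of `B_i/D`: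
there is a universal constant `C₀ > 0` such that, for every quadratic form with
`‖A‖₂/D ≤ 1` and `‖B‖/D ≤ 1` and every budget of `K` pairs of independent noisy
evaluations, `E[(B̂_i(D) − B_i/D)²] ≤ C₀/K`. -/
theorem copquad_linear_coefficient_mse :
    ∃ C₀ : ℝ, 0 < C₀ ∧
      ∀ (Ω : Type u) [MeasurableSpace Ω] (μ : Measure Ω) [IsProbabilityMeasure μ]
        (d : ℕ) (A : Matrix (Fin d) (Fin d) ℝ) (B : Fin d → ℝ) (C D : ℝ), 0 < D →
        A.IsSymm → l2OpNorm A / D ≤ 1 → evnorm B / D ≤ 1 →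
      ∀ (i : Fin d) (K : ℕ), 1 ≤ K →
      ∀ (G G' : Fin K → Ω → ℝ),
        (∀ j, Measurable (G j)) → (∀ l, Measurable (G' l)) →
        (∀ j, Measure.map (G j) μ = gaussianReal 0 1) →
        (∀ l, Measure.map (G' l) μ = gaussianReal 0 1) →
        iIndepFun (Sum.elim G G') μ →
      ∀ (h : ℝ → ℝ), IsClampedGaussInv 5 h →
        ∫ ω, (h (noisyCompFreq K (quadForm A B C (-Pi.single i 1))
                  (quadForm A B C (Pi.single i 1)) D G G' ω) / Real.sqrt 2
              - B i / D) ^ 2 ∂μ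
          ≤ C₀ / K := by

  refine ⟨mGauss⁻¹ ^ 2, pow_pos (inv_pos.2 mGauss_pos) 2, ?_⟩
  intro Ω _ μ _ d A B C D hD _hsymm _hA hB i K hK G G' hGm hG'm hGlaw hG'law hindep h hh
  classical
  have hKpos : (0:ℝ) < (K:ℝ) := by exact_mod_cast hK
  have hK0 : (K:ℝ) ≠ 0 := ne_of_gt hKpos
  set fx := quadForm A B C (-Pi.single i 1) with hfx
  set fy := quadForm A B C (Pi.single i 1) with hfy
  -- fy - fx = 2 B i
  have hdiff : fy - fx = 2 * B i := by
    rw [hfx, hfy]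
    simp only [quadForm]
    rw [Matrix.mulVec_neg, neg_dotProduct, dotProduct_neg, neg_neg,
      dotProduct_neg, dotProduct_single, mul_one]
    ring
  set c : ℝ := 2 * B i / D with hc
  set p : ℝ := stdGaussCDF (c / Real.sqrt 2) with hp
  have hp0 : 0 ≤ p := stdGaussCDF_nonneg _
  have hp1 : p ≤ 1 := stdGaussCDF_le_one _
  -- event sets
  set S : Fin K → Fin K → Set Ω := fun j l => (fun ω => G j ω - G' l ω) ⁻¹' (Set.Iio c)
    with hSdef
  have hSmeas : ∀ j l, MeasurableSet (S j l) := fun j l =>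
    ((hGm j).sub (hG'm l)) measurableSet_Iio
  have hSval : ∀ j l, μ (S j l) = ENNReal.ofReal p := by
    intro j l
    have hpair : IndepFun (G j) (G' l) μ :=
      hindep.indepFun (show (Sum.inl j : Fin K ⊕ Fin K) ≠ Sum.inr l by simp)
    have hmap : μ.map (fun ω => (G j ω, G' l ω))
        = ((gaussianReal 0 1).prod (gaussianReal 0 1)) := by
      rw [(indepFun_iff_map_prod_eq_prod_map_map (hGm j).aemeasurable
        (hG'm l).aemeasurable).1 hpair, hGlaw j, hG'law l]
    have hSp : S j l = (fun ω => (G j ω, G' l ω)) ⁻¹' {z : ℝ × ℝ | z.1 - z.2 < c} := rfl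
    rw [hSp, ← Measure.map_apply ((hGm j).prodMk (hG'm l))
      (measurableSet_lt (measurable_fst.sub measurable_snd) measurable_const :
        MeasurableSet {z : ℝ × ℝ | z.1 - z.2 < c}),
      hmap, gauss_conv, gauss2_Iio]
  -- independence of disjoint events
  have hmeasSum : ∀ x : Fin K ⊕ Fin K, Measurable (Sum.elim G G' x) := by
    intro x
    cases x with
    | inl j => exact hGm j
    | inr l => exact hG'm l
  have hSind : ∀ j l j' l', j ≠ j' → l ≠ l' →
      μ (S j l ∩ S j' l') = μ (S j l) * μ (S j' l') := by
    intro j l j' l' hjj' hll'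
    have hW : IndepFun (fun ω => G j ω - G' l ω) (fun ω => G j' ω - G' l' ω) μ := by
      have := hindep.indepFun_sub_sub hmeasSum (Sum.inl j) (Sum.inr l) (Sum.inl j') (Sum.inr l')
        (by simp [hjj']) (by simp) (by simp) (by simp [hll'])
      exact this
    exact hW.measure_inter_preimage_eq_mul _ _ measurableSet_Iio measurableSet_Iio
  -- indicator variables
  set Y : Fin K × Fin K → Ω → ℝ := fun q ω => if ω ∈ S q.1 q.2 then 1 else 0 with hYdef
  have hYmeas : ∀ q, Measurable (Y q) := fun q =>
    Measurable.ite (hSmeas q.1 q.2) measurable_const measurable_const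
  have hY01 : ∀ q ω, Y q ω = 0 ∨ Y q ω = 1 := by
    intro q ω
    by_cases hω : ω ∈ S q.1 q.2 <;> simp [hYdef, hω]
  have habs : ∀ q ω, |Y q ω - p| ≤ 1 := by
    intro q ω
    rcases hY01 q ω with h0 | h1
    · rw [h0, abs_le]; constructor <;> linarith
    · rw [h1, abs_le]; constructor <;> linarith
  have hYint : ∀ q, Integrable (Y q) μ := by
    intro q
    refine (integrable_const (1:ℝ)).mono' (hYmeas q).aestronglyMeasurable ?_
    refine Filter.Eventually.of_forall fun ω => ?_
    rw [Real.norm_eq_abs]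
    rcases hY01 q ω with h0 | h0 <;> simp [h0]
  have hEY : ∀ q, ∫ ω, Y q ω ∂μ = p := by
    intro q
    have hind : Y q = Set.indicator (S q.1 q.2) (fun _ => (1:ℝ)) := by
      funext ω
      simp [hYdef, Set.indicator_apply]
    rw [hind, integral_indicator_const _ (hSmeas q.1 q.2), measureReal_def, hSval q.1 q.2,
      ENNReal.toReal_ofReal hp0, smul_eq_mul, mul_one]
  have hYYint : ∀ q q', Integrable (fun ω => Y q ω * Y q' ω) μ := by
    intro q q'
    refine (integrable_const (1:ℝ)).mono'
      ((hYmeas q).mul (hYmeas q')).aestronglyMeasurable ?_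
    refine Filter.Eventually.of_forall fun ω => ?_
    rw [Real.norm_eq_abs, abs_mul]
    rcases hY01 q ω with h0 | h0 <;> rcases hY01 q' ω with h0' | h0' <;>
      simp [h0, h0']
  have hEYY : ∀ q q' : Fin K × Fin K, q.1 ≠ q'.1 → q.2 ≠ q'.2 →
      ∫ ω, Y q ω * Y q' ω ∂μ = p * p := by
    intro q q' h1 h2
    have hind : (fun ω => Y q ω * Y q' ω)
        = Set.indicator (S q.1 q.2 ∩ S q'.1 q'.2) (fun _ => (1:ℝ)) := by
      funext ω
      by_cases hω : ω ∈ S q.1 q.2 <;> by_cases hω' : ω ∈ S q'.1 q'.2 <;>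
        simp [hYdef, Set.indicator_apply, hω, hω', Set.mem_inter_iff]
    rw [hind, integral_indicator_const _ ((hSmeas q.1 q.2).inter (hSmeas q'.1 q'.2)),
      measureReal_def, hSind q.1 q.2 q'.1 q'.2 h1 h2, hSval, hSval, ENNReal.toReal_mul,
      ENNReal.toReal_ofReal hp0, smul_eq_mul, mul_one]
  have hZint : ∀ q q', Integrable (fun ω => (Y q ω - p) * (Y q' ω - p)) μ := by
    intro q q'
    refine (integrable_const (1:ℝ)).mono'
      (((hYmeas q).sub measurable_const).mul
        ((hYmeas q').sub measurable_const)).aestronglyMeasurable ?_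
    refine Filter.Eventually.of_forall fun ω => ?_
    rw [Real.norm_eq_abs, abs_mul]
    calc |Y q ω - p| * |Y q' ω - p| ≤ 1 * 1 :=
          mul_le_mul (habs q ω) (habs q' ω) (abs_nonneg _) zero_le_one
      _ = 1 := one_mul 1
  have hcov_le : ∀ q q', ∫ ω, (Y q ω - p) * (Y q' ω - p) ∂μ ≤ 1 := by
    intro q q'
    calc ∫ ω, (Y q ω - p) * (Y q' ω - p) ∂μ ≤ ∫ _ω, (1:ℝ) ∂μ := by
          refine integral_mono (hZint q q') (integrable_const 1) fun ω => ?_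
          calc (Y q ω - p) * (Y q' ω - p) ≤ |(Y q ω - p) * (Y q' ω - p)| := le_abs_self _
            _ ≤ 1 := by
                rw [abs_mul]
                calc |Y q ω - p| * |Y q' ω - p| ≤ 1 * 1 :=
                      mul_le_mul (habs q ω) (habs q' ω) (abs_nonneg _) zero_le_one
                  _ = 1 := one_mul 1
      _ = 1 := by simp
  have hcov_zero : ∀ q q' : Fin K × Fin K, q.1 ≠ q'.1 → q.2 ≠ q'.2 →
      ∫ ω, (Y q ω - p) * (Y q' ω - p) ∂μ = 0 := by
    intro q q' h1 h2
    have i1 : ∫ ω, (Y q ω * Y q' ω - p * Y q ω) ∂μ = p * p - p * p := by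
      rw [integral_sub (hYYint q q') ((hYint q).const_mul p), hEYY q q' h1 h2,
        integral_const_mul, hEY q]
    have i2 : ∫ ω, ((Y q ω * Y q' ω - p * Y q ω) - p * Y q' ω) ∂μ
        = (p * p - p * p) - p * p := by
      rw [integral_sub (f := fun ω => Y q ω * Y q' ω - p * Y q ω)
        (g := fun ω => p * Y q' ω)
        ((hYYint q q').sub ((hYint q).const_mul p)) ((hYint q').const_mul p),
        i1, integral_const_mul, hEY q']
    have i3 : ∫ ω, (((Y q ω * Y q' ω - p * Y q ω) - p * Y q' ω) + p * p) ∂μ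
        = ((p * p - p * p) - p * p) + p * p := by
      rw [integral_add (f := fun ω => Y q ω * Y q' ω - p * Y q ω - p * Y q' ω)
        (g := fun _ => p * p)
        ((((hYYint q q').sub ((hYint q).const_mul p))).sub
        ((hYint q').const_mul p)) (integrable_const _), i2, integral_const, probReal_univ]
      simp
    have hexp2 : (fun ω => (Y q ω - p) * (Y q' ω - p))
        = fun ω => ((Y q ω * Y q' ω - p * Y q ω) - p * Y q' ω) + p * p := by
      funext ω; ring
    rw [hexp2, i3]
    ring
  -- rewrite noisyCompFreq
  set F : Ω → ℝ := noisyCompFreq K fx fy D G G' with hF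
  have hiff : ∀ j l ω, (fx + D * G j ω < fy + D * G' l ω) ↔ ω ∈ S j l := by
    intro j l ω
    have key : (ω ∈ S j l) ↔ D * (G j ω - G' l ω) < 2 * B i := by
      show (G j ω - G' l ω < c) ↔ _
      rw [hc]
      exact lt_div_iff₀' hD
    rw [key, mul_sub]
    constructor <;> intro hlt <;> nlinarith [hdiff]
  have hFeq : ∀ ω, F ω = (1/(K:ℝ)^2) * ∑ q : Fin K × Fin K, Y q ω := by
    intro ω
    rw [hF]
    show (1 / (K : ℝ) ^ 2) * ∑ j : Fin K, ∑ l : Fin K,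
      (if fx + D * G j ω < fy + D * G' l ω then (1:ℝ) else 0) = _
    rw [Fintype.sum_prod_type]
    congr 1
    refine Finset.sum_congr rfl fun j _ => Finset.sum_congr rfl fun l _ => ?_
    exact if_congr (hiff j l ω) rfl rfl
  have hcard : ((Finset.univ : Finset (Fin K × Fin K)).card : ℝ) = (K:ℝ)^2 := by
    simp [Finset.card_univ]
    push_cast
    ring
  have hFeqZ : ∀ ω, (F ω - p)^2 = (1/(K:ℝ)^2)^2 *
      ∑ q : Fin K × Fin K, ∑ q' : Fin K × Fin K, (Y q ω - p) * (Y q' ω - p) := by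
    intro ω
    have hstep : F ω - p = (1/(K:ℝ)^2) * ∑ q : Fin K × Fin K, (Y q ω - p) := by
      rw [hFeq ω, Finset.sum_sub_distrib, Finset.sum_const, nsmul_eq_mul, hcard, mul_sub]
      congr 1
      field_simp
    rw [hstep, mul_pow, sq (∑ q : Fin K × Fin K, (Y q ω - p)), Finset.sum_mul_sum]
  -- the variance bound
  have hsum : ∑ q : Fin K × Fin K, ∑ q' : Fin K × Fin K,
      ∫ ω, (Y q ω - p) * (Y q' ω - p) ∂μ ≤ 2 * (K:ℝ)^3 := by
    have hle : ∑ q : Fin K × Fin K, ∑ q' : Fin K × Fin K,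
        ∫ ω, (Y q ω - p) * (Y q' ω - p) ∂μ
        ≤ ∑ q : Fin K × Fin K, ∑ q' : Fin K × Fin K,
          ((if q.1 = q'.1 then (1:ℝ) else 0) + (if q.2 = q'.2 then (1:ℝ) else 0)) := by
      refine Finset.sum_le_sum fun q _ => Finset.sum_le_sum fun q' _ => ?_
      by_cases h1 : q.1 = q'.1
      · calc ∫ ω, (Y q ω - p) * (Y q' ω - p) ∂μ ≤ 1 := hcov_le q q'
          _ ≤ _ := by simp [h1]; split_ifs <;> norm_num
      · by_cases h2 : q.2 = q'.2
        · calc ∫ ω, (Y q ω - p) * (Y q' ω - p) ∂μ ≤ 1 := hcov_le q q'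
            _ ≤ _ := by simp [h1, h2]
        · rw [hcov_zero q q' h1 h2]
          simp [h1, h2]
    refine le_trans hle ?_
    rw [Finset.sum_congr rfl fun q _ => Finset.sum_add_distrib, Finset.sum_add_distrib]
    have hcardP : ((Finset.univ : Finset (Fin K × Fin K)).card : ℝ) = (K:ℝ)^2 := by
      simp [Finset.card_univ]
      push_cast
      ring
    have count1 : ∑ q : Fin K × Fin K, ∑ q' : Fin K × Fin K,
        (if q.1 = q'.1 then (1:ℝ) else 0) = (K:ℝ)^3 := by
      have step : ∀ j : Fin K, ∑ q' : Fin K × Fin K,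
          (if j = q'.1 then (1:ℝ) else 0) = (K:ℝ) := by
        intro j
        rw [Fintype.sum_prod_type]
        have e : ∀ j' : Fin K, (∑ _l' : Fin K, if j = j' then (1:ℝ) else 0)
            = (K:ℝ) * (if j = j' then (1:ℝ) else 0) := by
          intro j'
          rw [Finset.sum_const, Finset.card_univ, Fintype.card_fin, nsmul_eq_mul]
        rw [Finset.sum_congr rfl fun j' _ => e j', ← Finset.mul_sum,
          Finset.sum_ite_eq, if_pos (Finset.mem_univ j), mul_one]
      calc ∑ q : Fin K × Fin K, ∑ q' : Fin K × Fin K, (if q.1 = q'.1 then (1:ℝ) else 0)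
          = ∑ _q : Fin K × Fin K, (K:ℝ) := Finset.sum_congr rfl fun q _ => step q.1
        _ = (K:ℝ)^3 := by
            rw [Finset.sum_const, nsmul_eq_mul, hcardP]
            ring
    have count2 : ∑ q : Fin K × Fin K, ∑ q' : Fin K × Fin K,
        (if q.2 = q'.2 then (1:ℝ) else 0) = (K:ℝ)^3 := by
      have step : ∀ l : Fin K, ∑ q' : Fin K × Fin K,
          (if l = q'.2 then (1:ℝ) else 0) = (K:ℝ) := by
        intro l
        rw [Fintype.sum_prod_type]
        have e : ∀ _j' : Fin K, (∑ l' : Fin K, if l = l' then (1:ℝ) else 0) = 1 := by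
          intro _j'
          rw [Finset.sum_ite_eq, if_pos (Finset.mem_univ l)]
        rw [Finset.sum_congr rfl fun j' _ => e j', Finset.sum_const, Finset.card_univ,
          Fintype.card_fin, nsmul_eq_mul, mul_one]
      calc ∑ q : Fin K × Fin K, ∑ q' : Fin K × Fin K, (if q.2 = q'.2 then (1:ℝ) else 0)
          = ∑ _q : Fin K × Fin K, (K:ℝ) := Finset.sum_congr rfl fun q _ => step q.2
        _ = (K:ℝ)^3 := by
            rw [Finset.sum_const, nsmul_eq_mul, hcardP]
            ring
    rw [count1, count2]
    linarith
  have hFsqint : Integrable (fun ω => (F ω - p)^2) μ := by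
    have : (fun ω => (F ω - p)^2) = fun ω => (1/(K:ℝ)^2)^2 *
        ∑ q : Fin K × Fin K, ∑ q' : Fin K × Fin K, (Y q ω - p) * (Y q' ω - p) := by
      funext ω; exact hFeqZ ω
    rw [this]
    exact (integrable_finset_sum _ fun q _ =>
      integrable_finset_sum _ fun q' _ => hZint q q').const_mul _
  have hvar : ∫ ω, (F ω - p)^2 ∂μ ≤ 2 / (K:ℝ) := by
    have heq : ∫ ω, (F ω - p)^2 ∂μ = (1/(K:ℝ)^2)^2 *
        ∑ q : Fin K × Fin K, ∑ q' : Fin K × Fin K,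
          ∫ ω, (Y q ω - p) * (Y q' ω - p) ∂μ := by
      simp_rw [hFeqZ]
      rw [integral_const_mul, integral_finset_sum _ fun q _ =>
        integrable_finset_sum _ fun q' _ => hZint q q']
      congr 1
      exact Finset.sum_congr rfl fun q _ => integral_finset_sum _ fun q' _ => hZint q q'
    rw [heq]
    calc (1/(K:ℝ)^2)^2 * ∑ q : Fin K × Fin K, ∑ q' : Fin K × Fin K,
          ∫ ω, (Y q ω - p) * (Y q' ω - p) ∂μ
        ≤ (1/(K:ℝ)^2)^2 * (2 * (K:ℝ)^3) :=
          mul_le_mul_of_nonneg_left hsum (by positivity)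
      _ = 2 / (K:ℝ) := by field_simp
  -- identification of h p
  have hBiD : |B i / D| ≤ 1 := by
    have hnormB : evnorm B ≤ D := (div_le_one hD).mp hB
    have hBi : |B i| ≤ evnorm B := by
      rw [evnorm, ← Real.sqrt_sq_eq_abs]
      exact Real.sqrt_le_sqrt
        (Finset.single_le_sum (fun j _ => sq_nonneg (B j)) (Finset.mem_univ i))
    rw [abs_div, abs_of_pos hD]
    exact div_le_one_of_le₀ (hBi.trans hnormB) hD.le
  have hs2 : Real.sqrt 2 * Real.sqrt 2 = 2 := Real.mul_self_sqrt (by norm_num)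
  have hs2pos : (0:ℝ) < Real.sqrt 2 := by positivity
  have hs2le : Real.sqrt 2 ≤ 5 := by nlinarith [Real.sqrt_nonneg 2]
  have hceq : c / Real.sqrt 2 = Real.sqrt 2 * (B i / D) := by
    rw [hc, div_eq_iff (ne_of_gt hs2pos)]
    have e : Real.sqrt 2 * (B i / D) * Real.sqrt 2
        = (Real.sqrt 2 * Real.sqrt 2) * (B i / D) := by ring
    rw [e, hs2]
    ring
  have ht5 : Real.sqrt 2 * (B i / D) ∈ Set.Icc (-5:ℝ) 5 := by
    have habs2 : |Real.sqrt 2 * (B i / D)| ≤ 5 := by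
      rw [abs_mul, abs_of_pos hs2pos]
      calc Real.sqrt 2 * |B i / D| ≤ Real.sqrt 2 * 1 :=
            mul_le_mul_of_nonneg_left hBiD hs2pos.le
        _ ≤ 5 := by rw [mul_one]; exact hs2le
    exact ⟨neg_le_of_abs_le habs2, le_of_abs_le habs2⟩
  have hhp : h p = Real.sqrt 2 * (B i / D) := by
    rw [hp, hceq]
    exact hh.1 _ ht5
  -- pointwise bound
  have hpoint : ∀ ω, (h (F ω) / Real.sqrt 2 - B i / D)^2
      ≤ mGauss⁻¹^2 / 2 * (F ω - p)^2 := by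
    intro ω
    have e1 : h (F ω) / Real.sqrt 2 - B i / D = (h (F ω) - h p) / Real.sqrt 2 := by
      rw [hhp, sub_div, mul_div_cancel_left₀ _ (ne_of_gt hs2pos)]
    rw [e1, div_pow, Real.sq_sqrt (by norm_num : (0:ℝ) ≤ 2)]
    have hlip : |h (F ω) - h p| ≤ mGauss⁻¹ * |F ω - p| := h_lipschitz h hh (F ω) p
    have hsq : (h (F ω) - h p)^2 ≤ (mGauss⁻¹ * |F ω - p|)^2 := by
      rw [← sq_abs (h (F ω) - h p)]
      exact pow_le_pow_left₀ (abs_nonneg _) hlip 2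
    have : (mGauss⁻¹ * |F ω - p|)^2 = mGauss⁻¹^2 * (F ω - p)^2 := by
      rw [mul_pow, sq_abs]
    linarith [hsq, this]
  -- conclusion
  calc ∫ ω, (h (F ω) / Real.sqrt 2 - B i / D)^2 ∂μ
      ≤ ∫ ω, mGauss⁻¹^2 / 2 * (F ω - p)^2 ∂μ :=
        integral_mono_of_nonneg (Filter.Eventually.of_forall fun ω => sq_nonneg _)
          (hFsqint.const_mul _) (Filter.Eventually.of_forall hpoint)
    _ = mGauss⁻¹^2 / 2 * ∫ ω, (F ω - p)^2 ∂μ := integral_const_mul _ _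
    _ ≤ mGauss⁻¹^2 / 2 * (2 / (K:ℝ)) :=
        mul_le_mul_of_nonneg_left hvar (by positivity)
    _ = mGauss⁻¹^2 / (K:ℝ) := by ring
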